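/- Let G be a connected graph on n ≥ 2 vertices and define f(X) = 3^{n−2} − Σ_{C ∈ 𝒞*(X)} 3^{|C|−2}, where 𝒞*(X) is the set of connected components of G − X of size at least 2. Then f is submodular: for all X, Y ⊆ V, f(X ∪ Y) + f(X ∩ Y) ≤ f(X) + f(Y). -/

import Mathlib

attribute [local instance] Classical.propDecidable

/-- `C` is the vertex set of a connected component of `G − X`. -/
def IsCompOf {V : Type*} (G : SimpleGraph V) (X C : Finset V) : Prop :=
  C.Nonempty ∧ Disjoint C X ∧ (G.induce (C : Set V)).Connected ∧
    ∀ a ∈ C, ∀ b : V, b ∉ X → G.Adj a b → b ∈ C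

/-- The Devadoss rank function `f(X) = 3^{n-2} - Σ_{C ∈ 𝒞*(X)} 3^{|C|-2}`. -/
noncomputable def devf {V : Type*} [Fintype V] (G : SimpleGraph V) (X : Finset V) : ℝ :=
  3 ^ (Fintype.card V - 2) -
    ∑ C ∈ Finset.univ.filter (fun C : Finset V => IsCompOf G X C ∧ 2 ≤ C.card),
      (3 : ℝ) ^ (C.card - 2)

namespace Devadoss

variable {V : Type*}

/-- The graph `G` with the vertices of `X` "deleted" (isolated). -/
def del (G : SimpleGraph V) (X : Finset V) : SimpleGraph V where
  Adj a b := G.Adj a b ∧ a ∉ X ∧ b ∉ X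
  symm := ⟨fun a b h => ⟨h.1.symm, h.2.2, h.2.1⟩⟩
  loopless := ⟨fun a h => G.loopless.irrefl a h.1⟩

lemma del_walk_not_mem {G : SimpleGraph V} {X : Finset V} :
    ∀ {a b : V}, (del G X).Walk a b → a ∉ X → b ∉ X := by
  intro a b p
  induction p with
  | nil => exact id
  | cons h _ ih => exact fun _ => ih h.2.2

section
variable [Fintype V] {G : SimpleGraph V}

lemma exists_comp (G : SimpleGraph V) {X : Finset V} {v : V} (hv : v ∉ X) :
    ∃ C : Finset V, IsCompOf G X C ∧ v ∈ C := by
  classical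
  let C : Finset V := Finset.univ.filter (fun b => (del G X).Reachable v b)
  have hmem : ∀ b, b ∈ C ↔ (del G X).Reachable v b := fun b => by
    simp [C]
  have hvC : v ∈ C := (hmem v).2 (SimpleGraph.Reachable.refl v)
  have hnotX : ∀ b ∈ C, b ∉ X := by
    intro b hb
    obtain ⟨p⟩ := (hmem b).1 hb
    exact del_walk_not_mem p hv
  have key : ∀ {a b : V} (_ : (del G X).Walk a b) (ha : a ∈ C) (hb : b ∈ C),
      (G.induce (C : Set V)).Reachable ⟨a, ha⟩ ⟨b, hb⟩ := by
    intro a b p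
    induction p with
    | nil => intro ha hb; exact SimpleGraph.Reachable.refl _
    | @cons a c b h q ih =>
      intro ha hb
      have hc : c ∈ C := (hmem c).2 (((hmem a).1 ha).trans h.reachable)
      have hadj : (G.induce (C : Set V)).Adj ⟨a, ha⟩ ⟨c, hc⟩ := by
        simpa using h.1
      exact hadj.reachable.trans (ih hc hb)
  refine ⟨C, ⟨⟨v, hvC⟩, ?_, ?_, ?_⟩, hvC⟩
  · exact Finset.disjoint_left.2 fun {b} hb hbX => hnotX b hb hbX
  · rw [SimpleGraph.connected_iff]
    refine ⟨fun x y => ?_, ⟨⟨v, hvC⟩⟩⟩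
    obtain ⟨p⟩ := (hmem x.1).1 (Finset.mem_coe.1 x.2)
    obtain ⟨q⟩ := (hmem y.1).1 (Finset.mem_coe.1 y.2)
    exact ((key p hvC _).symm.trans (key q hvC _))
  · intro a ha b hbX hadj
    have haX : a ∉ X := hnotX a ha
    exact (hmem b).2 (((hmem a).1 ha).trans
      (SimpleGraph.Adj.reachable (show (del G X).Adj a b from ⟨hadj, haX, hbX⟩)))

lemma absorb {X C Z : Finset V} (hC : IsCompOf G X C) (hZX : Disjoint Z X)
    (hZconn : (G.induce (Z : Set V)).Connected) {z : V} (hzZ : z ∈ Z) (hzC : z ∈ C) :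
    Z ⊆ C := by
  intro a ha
  obtain ⟨p⟩ := hZconn.preconnected ⟨z, hzZ⟩ ⟨a, ha⟩
  have main : ∀ {x y : (Z : Set V)} (_ : (G.induce (Z : Set V)).Walk x y), ↑x ∈ C → ↑y ∈ C := by
    intro x y p
    induction p with
    | nil => exact id
    | @cons x c y h q ih =>
      intro hx
      have hcX : (c : V) ∉ X := fun hmem =>
        Finset.disjoint_left.1 hZX (Finset.mem_coe.1 c.2) hmem
      have hadj : G.Adj (x : V) (c : V) := h
      exact ih (hC.2.2.2 _ hx _ hcX hadj)
  exact main p hzC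

lemma comp_unique {X C D : Finset V} (hC : IsCompOf G X C) (hD : IsCompOf G X D) {z : V}
    (hzC : z ∈ C) (hzD : z ∈ D) : C = D :=
  subset_antisymm (absorb hD hC.2.1 hC.2.2.1 hzC hzD) (absorb hC hD.2.1 hD.2.2.1 hzD hzC)

lemma exists_comp_superset {X X' Z : Finset V} (hXX' : X ⊆ X') (hZ : IsCompOf G X' Z) :
    ∃ C, IsCompOf G X C ∧ Z ⊆ C := by
  obtain ⟨z, hz⟩ := hZ.1
  have hzX : z ∉ X := fun h => Finset.disjoint_left.1 hZ.2.1 hz (hXX' h)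
  obtain ⟨C, hC, hzC⟩ := exists_comp G hzX
  exact ⟨C, hC, absorb hC (hZ.2.1.mono_right hXX') hZ.2.2.1 hz hzC⟩

lemma comp_mono {X X' C : Finset V} (hC : IsCompOf G X C) (hXX' : X ⊆ X')
    (hdis : Disjoint C X') : IsCompOf G X' C :=
  ⟨hC.1, hdis, hC.2.2.1, fun a ha b hb hadj => hC.2.2.2 a ha b (fun hbX => hb (hXX' hbX)) hadj⟩

lemma comp_shrink {X C R Z : Finset V} {v : V} (hC : IsCompOf G X C) (hv : v ∉ C)
    (hXR : X ⊆ R) (hZ : IsCompOf G (insert v R) Z) (hZC : Z ⊆ C) : IsCompOf G R Z := by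
  refine ⟨hZ.1, hZ.2.1.mono_right (Finset.subset_insert _ _), hZ.2.2.1, ?_⟩
  intro a ha b hb hadj
  by_cases hbv : b = v
  · subst hbv
    have hbX : b ∉ X := fun h => hb (hXR h)
    exact absurd (hC.2.2.2 a (hZC ha) _ hbX hadj) hv
  · exact hZ.2.2.2 a ha b (by simp [Finset.mem_insert, hbv, hb]) hadj

/-- weight of a component of size `k`. -/
noncomputable def wv (k : ℕ) : ℝ := if 2 ≤ k then (3 : ℝ) ^ (k - 2) else 0

lemma wv_nonneg (k : ℕ) : 0 ≤ wv k := by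
  unfold wv; split <;> positivity

lemma wv_add_le {a b c : ℕ} (ha : a + 1 ≤ c) (hb : b + 1 ≤ c) : wv a + wv b ≤ wv c := by
  by_cases h1 : 2 ≤ a
  · by_cases h2 : 2 ≤ b
    · have e1 : wv a = (3 : ℝ) ^ (a - 2) := if_pos h1
      have e2 : wv b = (3 : ℝ) ^ (b - 2) := if_pos h2
      have e3 : wv c = (3 : ℝ) ^ (c - 2) := if_pos (by omega)
      have l1 : (3 : ℝ) ^ (a - 2) ≤ 3 ^ (c - 3) :=
        pow_le_pow_right₀ (by norm_num) (by omega)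
      have l2 : (3 : ℝ) ^ (b - 2) ≤ 3 ^ (c - 3) :=
        pow_le_pow_right₀ (by norm_num) (by omega)
      have l3 : (3 : ℝ) ^ (c - 2) = 3 * 3 ^ (c - 3) := by
        have hc : c - 2 = (c - 3) + 1 := by omega
        rw [hc, pow_succ]; ring
      have hp : (0 : ℝ) ≤ 3 ^ (c - 3) := by positivity
      rw [e1, e2, e3, l3]; linarith
    · have e2 : wv b = 0 := if_neg h2
      have e1 : wv a = (3 : ℝ) ^ (a - 2) := if_pos h1
      have e3 : wv c = (3 : ℝ) ^ (c - 2) := if_pos (by omega)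
      have l1 : (3 : ℝ) ^ (a - 2) ≤ 3 ^ (c - 2) :=
        pow_le_pow_right₀ (by norm_num) (by omega)
      rw [e1, e2, e3]; linarith
  · by_cases h2 : 2 ≤ b
    · have e1 : wv a = 0 := if_neg h1
      have e2 : wv b = (3 : ℝ) ^ (b - 2) := if_pos h2
      have e3 : wv c = (3 : ℝ) ^ (c - 2) := if_pos (by omega)
      have l1 : (3 : ℝ) ^ (b - 2) ≤ 3 ^ (c - 2) :=
        pow_le_pow_right₀ (by norm_num) (by omega)
      rw [e1, e2, e3]; linarith
    · have e1 : wv a = 0 := if_neg h1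
      have e2 : wv b = 0 := if_neg h2
      rw [e1, e2]
      simpa using wv_nonneg c

/-- The finset of all components of `G − X`. -/
noncomputable def cS (G : SimpleGraph V) (X : Finset V) : Finset (Finset V) :=
  Finset.univ.filter (fun C => IsCompOf G X C)

/-- The total weight of components of `G − X`. -/
noncomputable def gf (G : SimpleGraph V) (X : Finset V) : ℝ :=
  ∑ C ∈ cS G X, wv C.card

lemma SCC_self {R C : Finset V} (hC : IsCompOf G R C) :
    (cS G R).filter (fun D => D ⊆ C) = {C} := by
  ext D
  simp only [Finset.mem_filter, Finset.mem_singleton, cS, Finset.mem_univ, true_and]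
  constructor
  · rintro ⟨hD, hsub⟩
    obtain ⟨z, hz⟩ := hD.1
    exact comp_unique hD hC hz (hsub hz)
  · rintro rfl
    exact ⟨hC, Finset.Subset.refl _⟩

lemma gsplit {X R : Finset V} (hXR : X ⊆ R) :
    gf G R = ∑ C ∈ cS G X, ∑ D ∈ (cS G R).filter (fun D => D ⊆ C), wv D.card := by
  simp only [Finset.sum_filter]
  rw [Finset.sum_comm]
  unfold gf
  apply Finset.sum_congr rfl
  intro D hD
  have hD' : IsCompOf G R D := by simpa [cS] using hD
  obtain ⟨C₀, hC₀, hDC₀⟩ := exists_comp_superset hXR hD'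
  have hC₀mem : C₀ ∈ cS G X := by simp [cS, hC₀]
  have huniq : ∀ C ∈ cS G X, C ≠ C₀ → (if D ⊆ C then wv D.card else 0) = 0 := by
    intro C hCmem hne
    rw [if_neg]
    intro hsub
    obtain ⟨z, hz⟩ := hD'.1
    exact hne (comp_unique (by simpa [cS] using hCmem) hC₀ (hsub hz) (hDC₀ hz))
  rw [Finset.sum_eq_single_of_mem C₀ hC₀mem huniq, if_pos hDC₀]

lemma local_ineq (G : SimpleGraph V) {u v : V} (huv : u ≠ v) (X : Finset V) :
    gf G (insert u X) + gf G (insert v X) ≤ gf G (insert u (insert v X)) + gf G X := by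
  rw [gsplit (G := G) (Finset.subset_insert u X), gsplit (G := G) (Finset.subset_insert v X),
    gsplit (G := G) ((Finset.subset_insert v X).trans (Finset.subset_insert u _)),
    gsplit (G := G) (Finset.Subset.refl X)]
  rw [← Finset.sum_add_distrib, ← Finset.sum_add_distrib]
  apply Finset.sum_le_sum
  intro C hCmem
  have hC : IsCompOf G X C := by simpa [cS] using hCmem
  rw [SCC_self hC, Finset.sum_singleton]
  have hdisX : Disjoint C X := hC.2.1
  by_cases hu : u ∈ C <;> by_cases hv : v ∈ C
  · -- main case : u ∈ C, v ∈ C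
    have huX : u ∉ X := Finset.disjoint_left.1 hdisX hu
    have hvX : v ∉ X := Finset.disjoint_left.1 hdisX hv
    obtain ⟨U₁, hU₁, hvU₁⟩ := exists_comp G (X := insert u X) (v := v)
      (by simp [Finset.mem_insert, huv.symm, hvX])
    obtain ⟨W₁, hW₁, huW₁⟩ := exists_comp G (X := insert v X) (v := u)
      (by simp [Finset.mem_insert, huv, huX])
    have hU₁C : U₁ ⊆ C := absorb hC (hU₁.2.1.mono_right (Finset.subset_insert _ _))
      hU₁.2.2.1 hvU₁ hv
    have hW₁C : W₁ ⊆ C := absorb hC (hW₁.2.1.mono_right (Finset.subset_insert _ _))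
      hW₁.2.2.1 huW₁ hu
    have huU₁ : u ∉ U₁ := fun h =>
      Finset.disjoint_left.1 hU₁.2.1 h (Finset.mem_insert_self u X)
    have hvW₁ : v ∉ W₁ := fun h =>
      Finset.disjoint_left.1 hW₁.2.1 h (Finset.mem_insert_self v X)
    have hU₁A : U₁ ∈ (cS G (insert u X)).filter (fun D => D ⊆ C) := by
      simp only [Finset.mem_filter, cS, Finset.mem_univ, true_and]
      exact ⟨hU₁, hU₁C⟩
    have hW₁B : W₁ ∈ (cS G (insert v X)).filter (fun D => D ⊆ C) := by
      simp only [Finset.mem_filter, cS, Finset.mem_univ, true_and]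
      exact ⟨hW₁, hW₁C⟩
    have key1 : ((cS G (insert u X)).filter (fun D => D ⊆ C)).erase U₁ ⊆
        (cS G (insert u (insert v X))).filter (fun D => D ⊆ C) := by
      intro D hD
      obtain ⟨hne, hDmem⟩ := Finset.mem_erase.1 hD
      rw [Finset.mem_filter] at hDmem ⊢
      obtain ⟨hDcs, hDC⟩ := hDmem
      have hD' : IsCompOf G (insert u X) D := by simpa [cS] using hDcs
      have hvD : v ∉ D := fun h => hne (comp_unique hD' hU₁ h hvU₁)
      have hdis := hD'.2.1
      rw [Finset.disjoint_insert_right] at hdis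
      refine ⟨?_, hDC⟩
      simp only [cS, Finset.mem_filter, Finset.mem_univ, true_and]
      refine comp_mono hD' (Finset.insert_subset_insert u (Finset.subset_insert v X)) ?_
      rw [Finset.disjoint_insert_right, Finset.disjoint_insert_right]
      exact ⟨hdis.1, hvD, hdis.2⟩
    have key2 : ((cS G (insert v X)).filter (fun D => D ⊆ C)).erase W₁ ⊆
        (cS G (insert u (insert v X))).filter (fun D => D ⊆ C) := by
      intro D hD
      obtain ⟨hne, hDmem⟩ := Finset.mem_erase.1 hD
      rw [Finset.mem_filter] at hDmem ⊢
      obtain ⟨hDcs, hDC⟩ := hDmem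
      have hD' : IsCompOf G (insert v X) D := by simpa [cS] using hDcs
      have huD : u ∉ D := fun h => hne (comp_unique hD' hW₁ h huW₁)
      have hdis := hD'.2.1
      refine ⟨?_, hDC⟩
      simp only [cS, Finset.mem_filter, Finset.mem_univ, true_and]
      refine comp_mono hD' (Finset.subset_insert u (insert v X)) ?_
      rw [Finset.disjoint_insert_right]
      exact ⟨huD, hdis⟩
    have key3 : Disjoint (((cS G (insert u X)).filter (fun D => D ⊆ C)).erase U₁)
        (((cS G (insert v X)).filter (fun D => D ⊆ C)).erase W₁) := by
      rw [Finset.disjoint_left]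
      intro D h1 h2
      obtain ⟨hne1, hDmem1⟩ := Finset.mem_erase.1 h1
      obtain ⟨hne2, hDmem2⟩ := Finset.mem_erase.1 h2
      rw [Finset.mem_filter] at hDmem1 hDmem2
      have hD1 : IsCompOf G (insert u X) D := by simpa [cS] using hDmem1.1
      have hD2 : IsCompOf G (insert v X) D := by simpa [cS] using hDmem2.1
      have hDC : D ⊆ C := hDmem1.2
      have huD : u ∉ D := fun h =>
        Finset.disjoint_left.1 hD1.2.1 h (Finset.mem_insert_self u X)
      have hvD : v ∉ D := fun h =>
        Finset.disjoint_left.1 hD2.2.1 h (Finset.mem_insert_self v X)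
      have huX : u ∉ X := Finset.disjoint_left.1 hdisX hu
      have hvX : v ∉ X := Finset.disjoint_left.1 hdisX hv
      have hDX : IsCompOf G X D := by
        refine ⟨hD1.1, hD1.2.1.mono_right (Finset.subset_insert _ _), hD1.2.2.1, ?_⟩
        intro a ha b hbX hadj
        by_cases hbu : b = u
        · subst hbu
          exact absurd (hD2.2.2.2 a ha b (by simp [Finset.mem_insert, huv, hbX]) hadj) huD
        · by_cases hbv : b = v
          · subst hbv
            exact absurd (hD1.2.2.2 a ha b (by simp [Finset.mem_insert, huv.symm, hbX]) hadj) hvD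
          · exact hD1.2.2.2 a ha b (by simp [Finset.mem_insert, hbu, hbX]) hadj
      obtain ⟨z, hz⟩ := hD1.1
      have hDCeq : D = C := comp_unique hDX hC hz (hDC hz)
      exact huD (hDCeq ▸ hu)
    have hcd1 : U₁.card + 1 ≤ C.card := by
      have hsub : U₁ ⊆ C.erase u := fun a ha =>
        Finset.mem_erase.2 ⟨fun h => huU₁ (h ▸ ha), hU₁C ha⟩
      have h1 := Finset.card_le_card hsub
      have h2 : (C.erase u).card = C.card - 1 := Finset.card_erase_of_mem hu
      have h3 : 0 < C.card := Finset.card_pos.2 ⟨u, hu⟩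
      omega
    have hcd2 : W₁.card + 1 ≤ C.card := by
      have hsub : W₁ ⊆ C.erase v := fun a ha =>
        Finset.mem_erase.2 ⟨fun h => hvW₁ (h ▸ ha), hW₁C ha⟩
      have h1 := Finset.card_le_card hsub
      have h2 : (C.erase v).card = C.card - 1 := Finset.card_erase_of_mem hv
      have h3 : 0 < C.card := Finset.card_pos.2 ⟨v, hv⟩
      omega
    have e1 := (Finset.add_sum_erase _ (fun D => wv D.card) hU₁A).symm
    have e2 := (Finset.add_sum_erase _ (fun D => wv D.card) hW₁B).symm
    have e3 := (Finset.sum_union (f := fun D => wv D.card) key3).symm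
    have e4 : ∑ D ∈ (((cS G (insert u X)).filter (fun D => D ⊆ C)).erase U₁ ∪
        ((cS G (insert v X)).filter (fun D => D ⊆ C)).erase W₁), wv D.card ≤
        ∑ D ∈ (cS G (insert u (insert v X))).filter (fun D => D ⊆ C), wv D.card :=
      Finset.sum_le_sum_of_subset_of_nonneg (Finset.union_subset key1 key2)
        (fun i _ _ => wv_nonneg _)
    have e5 : wv U₁.card + wv W₁.card ≤ wv C.card := wv_add_le hcd1 hcd2
    rw [e1, e2]
    linarith
  · -- u ∈ C, v ∉ C
    have c2 : IsCompOf G (insert v X) C :=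
      comp_mono hC (Finset.subset_insert _ _)
        (by rw [Finset.disjoint_insert_right]; exact ⟨hv, hdisX⟩)
    have hEq : (cS G (insert u X)).filter (fun D => D ⊆ C) =
        (cS G (insert u (insert v X))).filter (fun D => D ⊆ C) := by
      ext D
      simp only [Finset.mem_filter, cS, Finset.mem_univ, true_and]
      constructor
      · rintro ⟨hD, hDC⟩
        refine ⟨?_, hDC⟩
        have hvD : v ∉ D := fun h => hv (hDC h)
        have hdis := hD.2.1
        rw [Finset.disjoint_insert_right] at hdis
        refine comp_mono hD (Finset.insert_subset_insert u (Finset.subset_insert v X)) ?_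
        rw [Finset.disjoint_insert_right, Finset.disjoint_insert_right]
        exact ⟨hdis.1, hvD, hdis.2⟩
      · rintro ⟨hD, hDC⟩
        refine ⟨?_, hDC⟩
        have hcm : insert u (insert v X) = insert v (insert u X) := by
          ext a; simp only [Finset.mem_insert]; tauto
        have hD' : IsCompOf G (insert v (insert u X)) D := hcm ▸ hD
        exact comp_shrink hC hv (Finset.subset_insert u X) hD' hDC
    rw [hEq, SCC_self c2, Finset.sum_singleton]
  · -- u ∉ C, v ∈ C
    have c1 : IsCompOf G (insert u X) C :=
      comp_mono hC (Finset.subset_insert _ _)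
        (by rw [Finset.disjoint_insert_right]; exact ⟨hu, hdisX⟩)
    have hEq : (cS G (insert v X)).filter (fun D => D ⊆ C) =
        (cS G (insert u (insert v X))).filter (fun D => D ⊆ C) := by
      ext D
      simp only [Finset.mem_filter, cS, Finset.mem_univ, true_and]
      constructor
      · rintro ⟨hD, hDC⟩
        refine ⟨?_, hDC⟩
        have huD : u ∉ D := fun h => hu (hDC h)
        have hdis := hD.2.1
        refine comp_mono hD (Finset.subset_insert u (insert v X)) ?_
        rw [Finset.disjoint_insert_right]
        exact ⟨huD, hdis⟩
      · rintro ⟨hD, hDC⟩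
        refine ⟨?_, hDC⟩
        exact comp_shrink hC hu (Finset.subset_insert v X) hD hDC
    rw [hEq, SCC_self c1, Finset.sum_singleton]
    linarith
  · -- u ∉ C, v ∉ C
    have c1 : IsCompOf G (insert u X) C :=
      comp_mono hC (Finset.subset_insert _ _)
        (by rw [Finset.disjoint_insert_right]; exact ⟨hu, hdisX⟩)
    have c2 : IsCompOf G (insert v X) C :=
      comp_mono hC (Finset.subset_insert _ _)
        (by rw [Finset.disjoint_insert_right]; exact ⟨hv, hdisX⟩)
    have c12 : IsCompOf G (insert u (insert v X)) C :=
      comp_mono hC ((Finset.subset_insert v X).trans (Finset.subset_insert u _))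
        (by rw [Finset.disjoint_insert_right, Finset.disjoint_insert_right]
            exact ⟨hu, hv, hdisX⟩)
    rw [SCC_self c1, SCC_self c2, SCC_self c12, Finset.sum_singleton]

lemma marg (G : SimpleGraph V) (S : Finset V) : ∀ (X : Finset V) (v : V), v ∉ X → v ∉ S →
    gf G (X ∪ S) + gf G (insert v X) ≤ gf G (insert v (X ∪ S)) + gf G X := by
  induction S using Finset.induction_on with
  | empty => intro X v _ _; rw [Finset.union_empty]; linarith
  | @insert u S' hu ih =>
    intro X v hvX hvS
    have hvS' : v ∉ S' := fun h => hvS (Finset.mem_insert_of_mem h)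
    have hvu : v ≠ u := fun h => hvS (h ▸ Finset.mem_insert_self u S')
    rw [Finset.union_insert]
    by_cases huXS : u ∈ X ∪ S'
    · rw [Finset.insert_eq_self.2 huXS]
      exact ih X v hvX hvS'
    · have h1 := local_ineq G (u := v) (v := u) hvu (X ∪ S')
      have h2 := ih X v hvX hvS'
      linarith

lemma submod (G : SimpleGraph V) (T : Finset V) : ∀ (X B : Finset V), B ⊆ X → Disjoint T X →
    gf G X + gf G (B ∪ T) ≤ gf G (X ∪ T) + gf G B := by
  induction T using Finset.induction_on with
  | empty => intro X B _ _; rw [Finset.union_empty, Finset.union_empty]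
  | @insert v T' hv ih =>
    intro X B hBX hdis
    have hd' : Disjoint T' X := hdis.mono_left (Finset.subset_insert v T')
    have hvX : v ∉ X := Finset.disjoint_left.1 hdis (Finset.mem_insert_self v T')
    have h2 := ih X B hBX hd'
    have hvBT : v ∉ B ∪ T' := by
      rw [Finset.mem_union]
      rintro (h | h)
      · exact hvX (hBX h)
      · exact hv h
    have hvXT : v ∉ X ∪ T' := by
      rw [Finset.mem_union]
      rintro (h | h)
      · exact hvX h
      · exact hv h
    have h1 := marg G (X ∪ T') (B ∪ T') v hvBT hvXT
    have hUnion : (B ∪ T') ∪ (X ∪ T') = X ∪ T' :=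
      Finset.union_eq_right.2 (Finset.union_subset_union hBX (Finset.Subset.refl T'))
    rw [hUnion] at h1
    rw [Finset.union_insert, Finset.union_insert]
    linarith

lemma devf_eq (G : SimpleGraph V) (X : Finset V) :
    devf G X = (3 : ℝ) ^ (Fintype.card V - 2) - gf G X := by
  unfold devf gf
  congr 1
  have hset : (Finset.univ.filter (fun C : Finset V => IsCompOf G X C ∧ 2 ≤ C.card))
      = (cS G X).filter (fun C => 2 ≤ C.card) := by
    ext D
    simp [cS, Finset.mem_filter, and_assoc]
  rw [hset, Finset.sum_filter]
  apply Finset.sum_congr rfl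
  intro D _
  by_cases h2 : 2 ≤ D.card <;> simp [wv, h2]

end

end Devadoss

theorem stmt_5 {V : Type*} [Fintype V] (G : SimpleGraph V) (hG : G.Connected)
    (hn : 2 ≤ Fintype.card V) (X Y : Finset V) :
    devf G (X ∪ Y) + devf G (X ∩ Y) ≤ devf G X + devf G Y := by
  have h := Devadoss.submod G (Y \ X) X (X ∩ Y) Finset.inter_subset_left Finset.sdiff_disjoint
  rw [Finset.union_sdiff_self_eq_union] at h
  have hBT : (X ∩ Y) ∪ (Y \ X) = Y := by
    ext a
    simp only [Finset.mem_union, Finset.mem_inter, Finset.mem_sdiff]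
    tauto
  rw [hBT] at h
  rw [Devadoss.devf_eq, Devadoss.devf_eq, Devadoss.devf_eq, Devadoss.devf_eq]
  linarith
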